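/- Let n ≥ 2, let U ⊆ ℝⁿ be open, let g : U → Matrix (Fin n) (Fin n) ℝ take values in symmetric invertible matrices with pointwise inverse g^{ij}, let T^i_{jk} : U → ℝ be symmetric in j,k, define T^i = ((n+1)/((n+2)(n−1))) g^{jk} T^i_{jk} and T_i = g_{ij} T^j, and let φ : U → ℝ be differentiable. Then at any point x ∈ U the following are equivalent: (i) T^i_{jk} − g_{jk} g^{ip} ∂_pφ + (1/(n+1)) δ^i_j ∂_kφ + (1/(n+1)) δ^i_k ∂_jφ = 0 for all i,j,k; (ii) ∂_iφ = T_i for all i, and T^i_{jk} − g_{jk} T^i + (1/(n+1)) δ^i_j T_k + (1/(n+1)) δ^i_k T_j = 0 for all i,j,k. -/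

import Mathlib

open scoped BigOperators

/-- Partial derivative of `f` in the `k`-th coordinate direction at the point `x`. -/
noncomputable def pd {n : ℕ} (f : (Fin n → ℝ) → ℝ) (k : Fin n) (x : Fin n → ℝ) : ℝ :=
  fderiv ℝ f x (Pi.single k 1)

/-- Kronecker delta. -/
def kd {n : ℕ} (i j : Fin n) : ℝ := if i = j then 1 else 0

/-- Christoffel symbols `𝓕^i_{jk}(g) = ½ g^{ip}(∂_k g_{pj} + ∂_j g_{pk} − ∂_p g_{jk})`
of a metric `g` with pointwise inverse `ginv`. -/
noncomputable def christoffel {n : ℕ}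
    (g ginv : (Fin n → ℝ) → Matrix (Fin n) (Fin n) ℝ)
    (x : Fin n → ℝ) (i j k : Fin n) : ℝ :=
  (1 / 2) * ∑ p, ginv x i p *
    (pd (fun y => g y p j) k x + pd (fun y => g y p k) j x - pd (fun y => g y j k) p x)

/-- Conformal rescaling `x ↦ e^{2φ(x)} g(x)` of a metric `g`. -/
noncomputable def confRescale {n : ℕ} (φ : (Fin n → ℝ) → ℝ)
    (g : (Fin n → ℝ) → Matrix (Fin n) (Fin n) ℝ) :
    (Fin n → ℝ) → Matrix (Fin n) (Fin n) ℝ :=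
  fun x => Real.exp (2 * φ x) • g x

/-- The contraction `T^i = ((n+1)/((n+2)(n−1))) g^{jk} T^i_{jk}`. -/
noncomputable def upT {n : ℕ} (ginv : (Fin n → ℝ) → Matrix (Fin n) (Fin n) ℝ)
    (T : (Fin n → ℝ) → Fin n → Fin n → Fin n → ℝ) (x : Fin n → ℝ) (i : Fin n) : ℝ :=
  ((n + 1 : ℝ) / ((n + 2 : ℝ) * ((n : ℝ) - 1))) * ∑ j, ∑ k, ginv x j k * T x i j k

/-- The contraction `T_i = g_{ij} T^j`. -/
noncomputable def lowT {n : ℕ} (g ginv : (Fin n → ℝ) → Matrix (Fin n) (Fin n) ℝ)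
    (T : (Fin n → ℝ) → Fin n → Fin n → Fin n → ℝ) (x : Fin n → ℝ) (i : Fin n) : ℝ :=
  ∑ j, g x i j * upT ginv T x j

/-- equation `(5)` of the paper holds at `x` iff `∂_iφ = T_i` and the algebraic
condition (A) hold at `x`. -/
theorem eq_Meq_iff_gradient_and_condA {n : ℕ} (hn : 2 ≤ n)
    (U : Set (Fin n → ℝ)) (hU : IsOpen U)
    (g ginv : (Fin n → ℝ) → Matrix (Fin n) (Fin n) ℝ)
    (hg_symm : ∀ x ∈ U, (g x).IsSymm)
    (hg_inv : ∀ x ∈ U, g x * ginv x = 1)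
    (T : (Fin n → ℝ) → Fin n → Fin n → Fin n → ℝ)
    (hT_symm : ∀ x ∈ U, ∀ i j k, T x i j k = T x i k j)
    (φ : (Fin n → ℝ) → ℝ) (hφ : DifferentiableOn ℝ φ U)
    (x : Fin n → ℝ) (hx : x ∈ U) :
    (∀ i j k,
      T x i j k - g x j k * (∑ p, ginv x i p * pd φ p x)
        + (1 / (n + 1 : ℝ)) * kd i j * pd φ k x
        + (1 / (n + 1 : ℝ)) * kd i k * pd φ j x = 0)
    ↔
    ((∀ i, pd φ i x = lowT g ginv T x i) ∧
     (∀ i j k,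
       T x i j k - g x j k * upT ginv T x i
         + (1 / (n + 1 : ℝ)) * kd i j * lowT g ginv T x k
         + (1 / (n + 1 : ℝ)) * kd i k * lowT g ginv T x j = 0)) := by
  
  have hn1 : (n : ℝ) + 1 ≠ 0 := by positivity
  have hnR : (2 : ℝ) ≤ (n : ℝ) := by exact_mod_cast hn
  have hden : ((n : ℝ) + 2) * ((n : ℝ) - 1) ≠ 0 := by
    have h1 : (n : ℝ) + 2 > 0 := by linarith
    have h2 : (n : ℝ) - 1 > 0 := by linarith
    positivity
  set G := g x with hG
  set Gi := ginv x with hGi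
  set D := fun p => pd φ p x with hD
  set S := fun i => ∑ p, Gi i p * D p with hS
  have hGG : G * Gi = 1 := hg_inv x hx
  have hGiG : Gi * G = 1 := mul_eq_one_comm.mp hGG
  have key1 : ∀ i j : Fin n, (∑ p, G i p * Gi p j) = kd i j := by
    intro i j
    have := congrFun (congrFun hGG i) j
    simpa [Matrix.mul_apply, Matrix.one_apply, kd] using this
  have key2 : ∀ i j : Fin n, (∑ p, Gi i p * G p j) = kd i j := by
    intro i j
    have := congrFun (congrFun hGiG i) j
    simpa [Matrix.mul_apply, Matrix.one_apply, kd] using this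
  have gsymm : ∀ i j, G i j = G j i := by
    intro i j
    have h := hg_symm x hx
    exact h.apply j i
  have hGinv : Gi = G⁻¹ := (Matrix.inv_eq_right_inv hGG).symm
  have gisymm : ∀ i j, Gi i j = Gi j i := by
    intro i j
    have hs : Matrix.transpose Gi = Gi := by
      rw [hGinv, Matrix.transpose_nonsing_inv]
      rw [show Matrix.transpose G = G from hg_symm x hx]
    have := congrFun (congrFun hs j) i
    simpa [Matrix.transpose_apply] using this
  have traceN : (∑ j, ∑ k, Gi j k * G j k) = (n : ℝ) := by
    have h1 : ∀ j : Fin n, (∑ k, Gi j k * G j k) = 1 := by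
      intro j
      calc (∑ k, Gi j k * G j k) = ∑ k, Gi j k * G k j :=
            Finset.sum_congr rfl fun k _ => by rw [gsymm]
        _ = kd j j := key2 j j
        _ = 1 := by simp [kd]
    simp [h1]
  -- main forward computation: (i) implies upT i = S i
  have fwdUp : (∀ i j k,
      T x i j k - G j k * S i
        + (1 / (n + 1 : ℝ)) * kd i j * D k
        + (1 / (n + 1 : ℝ)) * kd i k * D j = 0) →
      ∀ i, upT ginv T x i = S i := by
    intro h i
    have hT : ∀ j k, T x i j k =
        G j k * S i - (1 / (n + 1 : ℝ)) * kd i j * D k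
          - (1 / (n + 1 : ℝ)) * kd i k * D j := by
      intro j k; have := h i j k; linarith
    have hsum : (∑ j, ∑ k, Gi j k * T x i j k)
        = ((n : ℝ) + 2) * ((n : ℝ) - 1) / ((n : ℝ) + 1) * S i := by
      have e1 : (∑ j, ∑ k, Gi j k * T x i j k)
          = (∑ j, ∑ k, Gi j k * G j k) * S i
            - (1 / (n + 1 : ℝ)) * (∑ j, ∑ k, Gi j k * kd i j * D k)
            - (1 / (n + 1 : ℝ)) * (∑ j, ∑ k, Gi j k * kd i k * D j) := by
        rw [Finset.sum_mul, Finset.mul_sum, Finset.mul_sum, ← Finset.sum_sub_distrib,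
          ← Finset.sum_sub_distrib]
        refine Finset.sum_congr rfl fun j _ => ?_
        rw [Finset.sum_mul, Finset.mul_sum, Finset.mul_sum, ← Finset.sum_sub_distrib,
          ← Finset.sum_sub_distrib]
        refine Finset.sum_congr rfl fun k _ => ?_
        rw [hT j k]; ring
      have e2 : (∑ j, ∑ k, Gi j k * kd i j * D k) = S i := by
        have : ∀ j : Fin n, (∑ k, Gi j k * kd i j * D k)
            = (if i = j then (1:ℝ) else 0) * ∑ k, Gi j k * D k := by
          intro j; rw [Finset.mul_sum]
          refine Finset.sum_congr rfl fun k _ => by by_cases hij : i = j <;> simp [kd, hij]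
        rw [Finset.sum_congr rfl fun j _ => this j]
        simp [hS, hD]
      have e3 : (∑ j, ∑ k, Gi j k * kd i k * D j) = S i := by
        rw [Finset.sum_comm]
        have : ∀ k : Fin n, (∑ j, Gi j k * kd i k * D j)
            = (if i = k then (1:ℝ) else 0) * ∑ j, Gi k j * D j := by
          intro k; rw [Finset.mul_sum]
          refine Finset.sum_congr rfl fun j _ => ?_
          rw [gisymm j k]; by_cases hik : i = k <;> simp [kd, hik]
        rw [Finset.sum_congr rfl fun k _ => this k]
        simp [hS, hD]
      rw [e1, e2, e3, traceN]
      field_simp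
      ring
    show ((n : ℝ) + 1) / (((n : ℝ) + 2) * ((n : ℝ) - 1)) * (∑ j, ∑ k, Gi j k * T x i j k) = S i
    rw [hsum]
    rw [← mul_assoc, div_mul_div_comm, mul_comm ((n:ℝ)+1), div_self (mul_ne_zero hden hn1), one_mul]
  have lowOfUp : (∀ i, upT ginv T x i = S i) → ∀ i, lowT g ginv T x i = D i := by
    intro hup i
    show (∑ j, G i j * upT ginv T x j) = D i
    calc (∑ j, G i j * upT ginv T x j) = ∑ j, G i j * ∑ p, Gi j p * D p := by
          refine Finset.sum_congr rfl fun j _ => by rw [hup j]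
      _ = ∑ j, ∑ p, G i j * Gi j p * D p := by
          refine Finset.sum_congr rfl fun j _ => by
            rw [Finset.mul_sum]; exact Finset.sum_congr rfl fun p _ => by ring
      _ = ∑ p, (∑ j, G i j * Gi j p) * D p := by
          rw [Finset.sum_comm]
          exact Finset.sum_congr rfl fun p _ => (Finset.sum_mul _ _ _).symm
      _ = ∑ p, kd i p * D p := Finset.sum_congr rfl fun p _ => by rw [key1]
      _ = D i := by simp [kd]
  have bwdS : (∀ i, D i = lowT g ginv T x i) → ∀ i, S i = upT ginv T x i := by
    intro hgrad i
    calc S i = ∑ p, Gi i p * ∑ q, G p q * upT ginv T x q := by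
          refine Finset.sum_congr rfl fun p _ => by rw [hgrad p]; rfl
      _ = ∑ p, ∑ q, Gi i p * G p q * upT ginv T x q := by
          refine Finset.sum_congr rfl fun p _ => by
            rw [Finset.mul_sum]; exact Finset.sum_congr rfl fun q _ => by ring
      _ = ∑ q, (∑ p, Gi i p * G p q) * upT ginv T x q := by
          rw [Finset.sum_comm]
          exact Finset.sum_congr rfl fun q _ => (Finset.sum_mul _ _ _).symm
      _ = ∑ q, kd i q * upT ginv T x q := Finset.sum_congr rfl fun q _ => by rw [key2]
      _ = upT ginv T x i := by simp [kd]
  constructor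
  · intro h
    have hup := fwdUp h
    have hlow := lowOfUp hup
    refine ⟨fun i => (hlow i).symm, fun i j k => ?_⟩
    have := h i j k
    rw [hup i, hlow j, hlow k]
    exact this
  · rintro ⟨hgrad, halg⟩
    intro i j k
    have hs := bwdS hgrad
    have := halg i j k
    show T x i j k - G j k * S i + _ + _ = 0
    rw [hs i, hgrad j, hgrad k]
    exact this
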